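/- Fix n ≥ 1 and let ρ = ρ₁ ⊗ ⋯ ⊗ ρₙ and σ = σ₁ ⊗ ⋯ ⊗ σₙ be arbitrary product density operators on (ℂ²)^{⊗n} (each ρ_ℓ, σ_ℓ a single-qubit density operator). Then A_n(ρ,σ) · B_{n,H}(ρ,σ) ≤ (18/5)^n, with equality attained when ρ = σ is an identical pure product state. -/

import Mathlib

open Matrix BigOperators
open scoped ComplexOrder

noncomputable section

abbrev QIdx (n : ℕ) := Fin n → Fin 2

def IsDensity {ι : Type*} [Fintype ι] [DecidableEq ι] (ρ : Matrix ι ι ℂ) : Prop :=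
  ρ.PosSemidef ∧ ρ.trace = 1

/-- The operator on `(ℂ²)^{⊗k}` permuting the `k` tensor factors according to `π`. -/
def permOp {k : ℕ} (π : Equiv.Perm (Fin k)) : Matrix (Fin k → Fin 2) (Fin k → Fin 2) ℂ :=
  fun a b => if ∀ i, b i = a (π i) then 1 else 0

def pauliX : Matrix (Fin 2) (Fin 2) ℂ := !![0, 1; 1, 0]
def pauliY : Matrix (Fin 2) (Fin 2) ℂ := !![0, -Complex.I; Complex.I, 0]
def pauliZ : Matrix (Fin 2) (Fin 2) ℂ := !![1, 0; 0, -1]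

/-- `P^{⊗k}` on `(ℂ²)^{⊗k}`. -/
def pauliPow (k : ℕ) (P : Matrix (Fin 2) (Fin 2) ℂ) :
    Matrix (Fin k → Fin 2) (Fin k → Fin 2) ℂ :=
  fun a b => ∏ i, P (a i) (b i)

/-- The single-qubit Clifford fourth-moment operator `R_{4,Cl}` on `(ℂ²)^{⊗4}`. -/
def R4Cl : Matrix (Fin 4 → Fin 2) (Fin 4 → Fin 2) ℂ :=
  -1 + ((1 : ℂ)/2) • (permOp (Equiv.swap 0 1) + permOp (Equiv.swap 2 3))
    + ((3 : ℂ)/4) • (1 + pauliPow 4 pauliX + pauliPow 4 pauliY + pauliPow 4 pauliZ)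

/-- The single-qubit Haar fourth-moment operator `R_{4,H}` on `(ℂ²)^{⊗4}`. -/
def R4H : Matrix (Fin 4 → Fin 2) (Fin 4 → Fin 2) ℂ :=
  ((1 : ℂ)/5) • (1 + permOp (Equiv.swap 0 1) + permOp (Equiv.swap 2 3))
  + ((3 : ℂ)/5) • (permOp (Equiv.swap 0 1 * Equiv.swap 2 3)
      + permOp (Equiv.swap 0 2 * Equiv.swap 1 3)
      + permOp (Equiv.swap 0 3 * Equiv.swap 1 2))
  - ((3 : ℂ)/10) • (permOp (Equiv.swap 0 2) + permOp (Equiv.swap 1 3)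
      + permOp (Equiv.swap 0 3) + permOp (Equiv.swap 1 2))

/-- Per-qubit `n`-fold tensor power of an operator on `(ℂ²)^{⊗k}` (k replicas),
acting on `k` copies of `(ℂ²)^{⊗n}`. -/
def repPow (n : ℕ) {k : ℕ} (R : Matrix (Fin k → Fin 2) (Fin k → Fin 2) ℂ) :
    Matrix (Fin k → QIdx n) (Fin k → QIdx n) ℂ :=
  fun a b => ∏ ℓ : Fin n, R (fun r => a r ℓ) (fun r => b r ℓ)

/-- The four-replica state `ρ ⊗ σ ⊗ ρ ⊗ σ`. -/
def rep4 {n : ℕ} (ρ σ : Matrix (QIdx n) (QIdx n) ℂ) :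
    Matrix (Fin 4 → QIdx n) (Fin 4 → QIdx n) ℂ :=
  fun a b => ρ (a 0) (b 0) * σ (a 1) (b 1) * ρ (a 2) (b 2) * σ (a 3) (b 3)

/-- The pure state `|ψ⟩⟨ψ|`. -/
def pureState {ι : Type*} (ψ : ι → ℂ) : Matrix ι ι ℂ :=
  fun a b => ψ a * star (ψ b)


/-- `ρ ⊗ σ` on `(ℂ²)^{⊗n} ⊗ (ℂ²)^{⊗n}`. -/
def kron2 {n : ℕ} (ρ σ : Matrix (QIdx n) (QIdx n) ℂ) :
    Matrix (QIdx n × QIdx n) (QIdx n × QIdx n) ℂ :=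
  fun p q => ρ p.1 q.1 * σ p.2 q.2

/-- The partial swap `F_S` on `(ℂ²)^{⊗n} ⊗ (ℂ²)^{⊗n}`. -/
def partialSwap {n : ℕ} (S : Finset (Fin n)) :
    Matrix (QIdx n × QIdx n) (QIdx n × QIdx n) ℂ :=
  fun p q => if (∀ ℓ, if ℓ ∈ S then q.1 ℓ = p.2 ℓ ∧ q.2 ℓ = p.1 ℓ
      else q.1 ℓ = p.1 ℓ ∧ q.2 ℓ = p.2 ℓ) then 1 else 0

/-- The second-moment coefficient `A_n(ρ,σ) = Σ_{S ⊆ [n]} 2^{n−|S|} tr[F_S(ρ⊗σ)]`. -/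
def An {n : ℕ} (ρ σ : Matrix (QIdx n) (QIdx n) ℂ) : ℂ :=
  ∑ S : Finset (Fin n), (2 : ℂ)^(n - S.card) * Matrix.trace (partialSwap S * kron2 ρ σ)

/-- The Haar fourth-moment coefficient `B_{n,H}(ρ,σ) = tr[R_{4,H}^{⊗n}(ρ⊗σ⊗ρ⊗σ)]`. -/
def BnH {n : ℕ} (ρ σ : Matrix (QIdx n) (QIdx n) ℂ) : ℂ :=
  Matrix.trace (repPow n R4H * rep4 ρ σ)

/-- The product state `ρ₁ ⊗ ⋯ ⊗ ρₙ` built from single-qubit operators. -/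
def prodState {n : ℕ} (ρ : Fin n → Matrix (Fin 2) (Fin 2) ℂ) :
    Matrix (QIdx n) (QIdx n) ℂ :=
  fun a b => ∏ ℓ, ρ ℓ (a ℓ) (b ℓ)


/-! ### Auxiliary machinery -/

/-- `tr(ρσ)` for single-qubit operators, written out entrywise. -/
def tC (ρ σ : Matrix (Fin 2) (Fin 2) ℂ) : ℂ :=
  ρ 0 0 * σ 0 0 + ρ 0 1 * σ 1 0 + ρ 1 0 * σ 0 1 + ρ 1 1 * σ 1 1

/-- Per-qubit value of `B`. -/
def bC (ρ σ : Matrix (Fin 2) (Fin 2) ℂ) : ℂ :=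
  (1/5) * (1 + 2 * tC ρ σ) + (3/5) * (2 * (tC ρ σ)^2 + tC ρ ρ * tC σ σ)
    - (3/10) * (tC ρ ρ + tC σ σ + 2 * tC ρ σ)

def q4 (R : Matrix (Fin 4 → Fin 2) (Fin 4 → Fin 2) ℂ) (ρ σ : Matrix (Fin 2) (Fin 2) ℂ) : ℂ :=
  ∑ a : Fin 4 → Fin 2, ∑ b : Fin 4 → Fin 2,
    R a b * (ρ (b 0) (a 0) * σ (b 1) (a 1) * ρ (b 2) (a 2) * σ (b 3) (a 3))

def tup4 : (Fin 2 × Fin 2 × Fin 2 × Fin 2) ≃ (Fin 4 → Fin 2) where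
  toFun x := ![x.1, x.2.1, x.2.2.1, x.2.2.2]
  invFun f := (f 0, f 1, f 2, f 3)
  left_inv := fun x => by rfl
  right_inv f := by funext i; fin_cases i <;> rfl

lemma sum_fin4 (g : (Fin 4 → Fin 2) → ℂ) :
    ∑ f, g f = ∑ x0 : Fin 2, ∑ x1 : Fin 2, ∑ x2 : Fin 2, ∑ x3 : Fin 2, g ![x0, x1, x2, x3] := by
  rw [← tup4.sum_comp g, Fintype.sum_prod_type]
  congr 1; funext x0
  rw [Fintype.sum_prod_type]
  congr 1; funext x1
  rw [Fintype.sum_prod_type]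
  rfl

lemma q4_permOp (π : Equiv.Perm (Fin 4)) (ρ σ : Matrix (Fin 2) (Fin 2) ℂ) :
    q4 (permOp π) ρ σ = ∑ a : Fin 4 → Fin 2,
      ρ (a (π 0)) (a 0) * σ (a (π 1)) (a 1) * ρ (a (π 2)) (a 2) * σ (a (π 3)) (a 3) := by
  unfold q4 permOp
  congr 1; funext a
  have h : ∀ b : Fin 4 → Fin 2, (∀ i, b i = a (π i)) ↔ b = fun i => a (π i) := by
    intro b; rw [funext_iff]
  simp only [h, ite_mul, one_mul, zero_mul]
  rw [Finset.sum_ite_eq' Finset.univ (fun i => a (π i))]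
  simp

section evals
variable (ρ σ : Matrix (Fin 2) (Fin 2) ℂ)

lemma q4_one : q4 1 ρ σ = (ρ 0 0 + ρ 1 1) * (σ 0 0 + σ 1 1) * (ρ 0 0 + ρ 1 1) * (σ 0 0 + σ 1 1) := by
  have h : (1 : Matrix (Fin 4 → Fin 2) (Fin 4 → Fin 2) ℂ) = permOp 1 := by
    funext a b
    simp only [permOp, Equiv.Perm.coe_one, id_eq, Matrix.one_apply]
    congr 1
    simp [funext_iff, eq_comm]
  rw [h, q4_permOp, sum_fin4]
  simp only [Equiv.Perm.coe_one, id_eq, Fin.sum_univ_two, Matrix.cons_val_zero,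
    Matrix.cons_val_one, Matrix.head_cons, Matrix.cons_val_two, Matrix.cons_val_three,
    Matrix.tail_cons]
  ring

lemma q4_F01 : q4 (permOp (Equiv.swap 0 1)) ρ σ = tC ρ σ * (ρ 0 0 + ρ 1 1) * (σ 0 0 + σ 1 1) := by
  rw [q4_permOp, sum_fin4]
  have h0 : (Equiv.swap (0:Fin 4) 1) 0 = 1 := by decide
  have h1 : (Equiv.swap (0:Fin 4) 1) 1 = 0 := by decide
  have h2 : (Equiv.swap (0:Fin 4) 1) 2 = 2 := by decide
  have h3 : (Equiv.swap (0:Fin 4) 1) 3 = 3 := by decide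
  simp only [h0, h1, h2, h3, Fin.sum_univ_two, Matrix.cons_val_zero, Matrix.cons_val_one,
    Matrix.head_cons, Matrix.cons_val_two, Matrix.cons_val_three, Matrix.tail_cons]
  unfold tC; ring

lemma q4_F23 : q4 (permOp (Equiv.swap 2 3)) ρ σ = (ρ 0 0 + ρ 1 1) * (σ 0 0 + σ 1 1) * tC ρ σ := by
  rw [q4_permOp, sum_fin4]
  have h0 : ((Equiv.swap 2 3) : Equiv.Perm (Fin 4)) 0 = 0 := by decide
  have h1 : ((Equiv.swap 2 3) : Equiv.Perm (Fin 4)) 1 = 1 := by decide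
  have h2 : ((Equiv.swap 2 3) : Equiv.Perm (Fin 4)) 2 = 3 := by decide
  have h3 : ((Equiv.swap 2 3) : Equiv.Perm (Fin 4)) 3 = 2 := by decide
  simp only [h0, h1, h2, h3, Fin.sum_univ_two, Matrix.cons_val_zero, Matrix.cons_val_one,
    Matrix.head_cons, Matrix.cons_val_two, Matrix.cons_val_three, Matrix.tail_cons]
  unfold tC; ring

lemma q4_P0123 : q4 (permOp (Equiv.swap 0 1 * Equiv.swap 2 3)) ρ σ = tC ρ σ * tC ρ σ := by
  rw [q4_permOp, sum_fin4]
  have h0 : ((Equiv.swap 0 1 * Equiv.swap 2 3) : Equiv.Perm (Fin 4)) 0 = 1 := by decide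
  have h1 : ((Equiv.swap 0 1 * Equiv.swap 2 3) : Equiv.Perm (Fin 4)) 1 = 0 := by decide
  have h2 : ((Equiv.swap 0 1 * Equiv.swap 2 3) : Equiv.Perm (Fin 4)) 2 = 3 := by decide
  have h3 : ((Equiv.swap 0 1 * Equiv.swap 2 3) : Equiv.Perm (Fin 4)) 3 = 2 := by decide
  simp only [h0, h1, h2, h3, Fin.sum_univ_two, Matrix.cons_val_zero, Matrix.cons_val_one,
    Matrix.head_cons, Matrix.cons_val_two, Matrix.cons_val_three, Matrix.tail_cons]
  unfold tC; ring

lemma q4_P0213 : q4 (permOp (Equiv.swap 0 2 * Equiv.swap 1 3)) ρ σ = tC ρ ρ * tC σ σ := by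
  rw [q4_permOp, sum_fin4]
  have h0 : ((Equiv.swap 0 2 * Equiv.swap 1 3) : Equiv.Perm (Fin 4)) 0 = 2 := by decide
  have h1 : ((Equiv.swap 0 2 * Equiv.swap 1 3) : Equiv.Perm (Fin 4)) 1 = 3 := by decide
  have h2 : ((Equiv.swap 0 2 * Equiv.swap 1 3) : Equiv.Perm (Fin 4)) 2 = 0 := by decide
  have h3 : ((Equiv.swap 0 2 * Equiv.swap 1 3) : Equiv.Perm (Fin 4)) 3 = 1 := by decide
  simp only [h0, h1, h2, h3, Fin.sum_univ_two, Matrix.cons_val_zero, Matrix.cons_val_one,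
    Matrix.head_cons, Matrix.cons_val_two, Matrix.cons_val_three, Matrix.tail_cons]
  unfold tC; ring

lemma q4_P0312 : q4 (permOp (Equiv.swap 0 3 * Equiv.swap 1 2)) ρ σ = tC ρ σ * tC ρ σ := by
  rw [q4_permOp, sum_fin4]
  have h0 : ((Equiv.swap 0 3 * Equiv.swap 1 2) : Equiv.Perm (Fin 4)) 0 = 3 := by decide
  have h1 : ((Equiv.swap 0 3 * Equiv.swap 1 2) : Equiv.Perm (Fin 4)) 1 = 2 := by decide
  have h2 : ((Equiv.swap 0 3 * Equiv.swap 1 2) : Equiv.Perm (Fin 4)) 2 = 1 := by decide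
  have h3 : ((Equiv.swap 0 3 * Equiv.swap 1 2) : Equiv.Perm (Fin 4)) 3 = 0 := by decide
  simp only [h0, h1, h2, h3, Fin.sum_univ_two, Matrix.cons_val_zero, Matrix.cons_val_one,
    Matrix.head_cons, Matrix.cons_val_two, Matrix.cons_val_three, Matrix.tail_cons]
  unfold tC; ring

lemma q4_F02 : q4 (permOp (Equiv.swap 0 2)) ρ σ = tC ρ ρ * (σ 0 0 + σ 1 1) * (σ 0 0 + σ 1 1) := by
  rw [q4_permOp, sum_fin4]
  have h0 : ((Equiv.swap 0 2) : Equiv.Perm (Fin 4)) 0 = 2 := by decide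
  have h1 : ((Equiv.swap 0 2) : Equiv.Perm (Fin 4)) 1 = 1 := by decide
  have h2 : ((Equiv.swap 0 2) : Equiv.Perm (Fin 4)) 2 = 0 := by decide
  have h3 : ((Equiv.swap 0 2) : Equiv.Perm (Fin 4)) 3 = 3 := by decide
  simp only [h0, h1, h2, h3, Fin.sum_univ_two, Matrix.cons_val_zero, Matrix.cons_val_one,
    Matrix.head_cons, Matrix.cons_val_two, Matrix.cons_val_three, Matrix.tail_cons]
  unfold tC; ring

lemma q4_F13 : q4 (permOp (Equiv.swap 1 3)) ρ σ = tC σ σ * (ρ 0 0 + ρ 1 1) * (ρ 0 0 + ρ 1 1) := by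
  rw [q4_permOp, sum_fin4]
  have h0 : ((Equiv.swap 1 3) : Equiv.Perm (Fin 4)) 0 = 0 := by decide
  have h1 : ((Equiv.swap 1 3) : Equiv.Perm (Fin 4)) 1 = 3 := by decide
  have h2 : ((Equiv.swap 1 3) : Equiv.Perm (Fin 4)) 2 = 2 := by decide
  have h3 : ((Equiv.swap 1 3) : Equiv.Perm (Fin 4)) 3 = 1 := by decide
  simp only [h0, h1, h2, h3, Fin.sum_univ_two, Matrix.cons_val_zero, Matrix.cons_val_one,
    Matrix.head_cons, Matrix.cons_val_two, Matrix.cons_val_three, Matrix.tail_cons]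
  unfold tC; ring

lemma q4_F03 : q4 (permOp (Equiv.swap 0 3)) ρ σ = tC ρ σ * (ρ 0 0 + ρ 1 1) * (σ 0 0 + σ 1 1) := by
  rw [q4_permOp, sum_fin4]
  have h0 : ((Equiv.swap 0 3) : Equiv.Perm (Fin 4)) 0 = 3 := by decide
  have h1 : ((Equiv.swap 0 3) : Equiv.Perm (Fin 4)) 1 = 1 := by decide
  have h2 : ((Equiv.swap 0 3) : Equiv.Perm (Fin 4)) 2 = 2 := by decide
  have h3 : ((Equiv.swap 0 3) : Equiv.Perm (Fin 4)) 3 = 0 := by decide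
  simp only [h0, h1, h2, h3, Fin.sum_univ_two, Matrix.cons_val_zero, Matrix.cons_val_one,
    Matrix.head_cons, Matrix.cons_val_two, Matrix.cons_val_three, Matrix.tail_cons]
  unfold tC; ring

lemma q4_F12 : q4 (permOp (Equiv.swap 1 2)) ρ σ = tC ρ σ * (ρ 0 0 + ρ 1 1) * (σ 0 0 + σ 1 1) := by
  rw [q4_permOp, sum_fin4]
  have h0 : ((Equiv.swap 1 2) : Equiv.Perm (Fin 4)) 0 = 0 := by decide
  have h1 : ((Equiv.swap 1 2) : Equiv.Perm (Fin 4)) 1 = 2 := by decide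
  have h2 : ((Equiv.swap 1 2) : Equiv.Perm (Fin 4)) 2 = 1 := by decide
  have h3 : ((Equiv.swap 1 2) : Equiv.Perm (Fin 4)) 3 = 3 := by decide
  simp only [h0, h1, h2, h3, Fin.sum_univ_two, Matrix.cons_val_zero, Matrix.cons_val_one,
    Matrix.head_cons, Matrix.cons_val_two, Matrix.cons_val_three, Matrix.tail_cons]
  unfold tC; ring


lemma q4_add (R S : Matrix (Fin 4 → Fin 2) (Fin 4 → Fin 2) ℂ) :
    q4 (R + S) ρ σ = q4 R ρ σ + q4 S ρ σ := by
  simp [q4, Matrix.add_apply, add_mul, Finset.sum_add_distrib]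

lemma q4_smul (c : ℂ) (R : Matrix (Fin 4 → Fin 2) (Fin 4 → Fin 2) ℂ) :
    q4 (c • R) ρ σ = c * q4 R ρ σ := by
  simp [q4, Matrix.smul_apply, smul_eq_mul, mul_assoc, Finset.mul_sum]

lemma q4_sub (R S : Matrix (Fin 4 → Fin 2) (Fin 4 → Fin 2) ℂ) :
    q4 (R - S) ρ σ = q4 R ρ σ - q4 S ρ σ := by
  simp [q4, Matrix.sub_apply, sub_mul, Finset.sum_sub_distrib]

lemma q4_R4H (h1 : ρ 0 0 + ρ 1 1 = 1) (h2 : σ 0 0 + σ 1 1 = 1) :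
    q4 R4H ρ σ = bC ρ σ := by
  unfold R4H
  simp only [q4_sub, q4_add, q4_smul, q4_one, q4_F01, q4_F23, q4_P0123, q4_P0213, q4_P0312,
    q4_F02, q4_F13, q4_F03, q4_F12, h1, h2]
  unfold bC; ring

end evals

/-! ### Factorization of `BnH` over qubits -/

def repSplit (n : ℕ) :
    ((Fin 4 → QIdx n) × (Fin 4 → QIdx n)) ≃ (Fin n → ((Fin 4 → Fin 2) × (Fin 4 → Fin 2))) where
  toFun p := fun ℓ => (fun r => p.1 r ℓ, fun r => p.2 r ℓ)
  invFun f := (fun r ℓ => (f ℓ).1 r, fun r ℓ => (f ℓ).2 r)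
  left_inv _ := rfl
  right_inv _ := rfl

lemma BnH_prod {n : ℕ} (ρ σ : Fin n → Matrix (Fin 2) (Fin 2) ℂ) :
    BnH (prodState ρ) (prodState σ) = ∏ ℓ, q4 R4H (ρ ℓ) (σ ℓ) := by
  unfold BnH
  rw [Matrix.trace]
  simp only [Matrix.diag_apply, Matrix.mul_apply]
  have key : ∀ a b : Fin 4 → QIdx n,
      repPow n R4H a b * rep4 (prodState ρ) (prodState σ) b a
        = ∏ ℓ, (R4H (fun r => a r ℓ) (fun r => b r ℓ)
            * (ρ ℓ (b 0 ℓ) (a 0 ℓ) * σ ℓ (b 1 ℓ) (a 1 ℓ) * ρ ℓ (b 2 ℓ) (a 2 ℓ)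
                * σ ℓ (b 3 ℓ) (a 3 ℓ))) := by
    intro a b
    simp only [repPow, rep4, prodState, ← Finset.prod_mul_distrib]
  simp only [key]
  rw [← Fintype.sum_prod_type']
  refine Eq.trans (Fintype.sum_equiv (repSplit n) _
    (fun f => ∏ ℓ, (R4H (f ℓ).1 (f ℓ).2
      * (ρ ℓ ((f ℓ).2 0) ((f ℓ).1 0) * σ ℓ ((f ℓ).2 1) ((f ℓ).1 1)
        * ρ ℓ ((f ℓ).2 2) ((f ℓ).1 2) * σ ℓ ((f ℓ).2 3) ((f ℓ).1 3)))) (fun x => rfl)) ?_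
  have hs := Finset.prod_univ_sum
    (fun _ : Fin n => (Finset.univ : Finset ((Fin 4 → Fin 2) × (Fin 4 → Fin 2))))
    (fun ℓ y => R4H y.1 y.2 * (ρ ℓ (y.2 0) (y.1 0) * σ ℓ (y.2 1) (y.1 1)
      * ρ ℓ (y.2 2) (y.1 2) * σ ℓ (y.2 3) (y.1 3)))
  refine Eq.trans hs.symm ?_
  apply Finset.prod_congr rfl
  intro ℓ _
  rw [q4, Fintype.sum_prod_type]

/-! ### Factorization of `An` over qubits -/

def pairSplit (n : ℕ) : (QIdx n × QIdx n) ≃ (Fin n → (Fin 2 × Fin 2)) where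
  toFun p := fun ℓ => (p.1 ℓ, p.2 ℓ)
  invFun f := (fun ℓ => (f ℓ).1, fun ℓ => (f ℓ).2)
  left_inv _ := rfl
  right_inv _ := rfl

lemma trace_partialSwap {n : ℕ} (S : Finset (Fin n)) (ρ σ : Fin n → Matrix (Fin 2) (Fin 2) ℂ)
    (h1 : ∀ ℓ, ρ ℓ 0 0 + ρ ℓ 1 1 = 1) (h2 : ∀ ℓ, σ ℓ 0 0 + σ ℓ 1 1 = 1) :
    Matrix.trace (partialSwap S * kron2 (prodState ρ) (prodState σ))
      = ∏ ℓ, (if ℓ ∈ S then tC (ρ ℓ) (σ ℓ) else 1) := by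
  rw [Matrix.trace]
  simp only [Matrix.diag_apply, Matrix.mul_apply, partialSwap]
  have hcond : ∀ p q : QIdx n × QIdx n,
      (∀ ℓ, if ℓ ∈ S then q.1 ℓ = p.2 ℓ ∧ q.2 ℓ = p.1 ℓ
        else q.1 ℓ = p.1 ℓ ∧ q.2 ℓ = p.2 ℓ)
      ↔ q = (fun ℓ => if ℓ ∈ S then p.2 ℓ else p.1 ℓ,
             fun ℓ => if ℓ ∈ S then p.1 ℓ else p.2 ℓ) := by
    intro p q
    constructor
    · intro h
      have e1 : q.1 = fun ℓ => if ℓ ∈ S then p.2 ℓ else p.1 ℓ := by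
        funext ℓ; have := h ℓ
        by_cases hℓ : ℓ ∈ S <;> simp [hℓ] at this ⊢ <;> exact this.1
      have e2 : q.2 = fun ℓ => if ℓ ∈ S then p.1 ℓ else p.2 ℓ := by
        funext ℓ; have := h ℓ
        by_cases hℓ : ℓ ∈ S <;> simp [hℓ] at this ⊢ <;> exact this.2
      exact Prod.ext e1 e2
    · intro h ℓ
      subst h
      by_cases hℓ : ℓ ∈ S <;> simp [hℓ]
  simp only [hcond, ite_mul, one_mul, zero_mul]
  simp only [Finset.sum_ite_eq' Finset.univ, Finset.mem_univ, if_true]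
  have key : ∀ p : QIdx n × QIdx n,
      kron2 (prodState ρ) (prodState σ)
        (fun ℓ => if ℓ ∈ S then p.2 ℓ else p.1 ℓ, fun ℓ => if ℓ ∈ S then p.1 ℓ else p.2 ℓ) p
      = ∏ ℓ, (ρ ℓ (if ℓ ∈ S then p.2 ℓ else p.1 ℓ) (p.1 ℓ)
              * σ ℓ (if ℓ ∈ S then p.1 ℓ else p.2 ℓ) (p.2 ℓ)) := by
    intro p
    simp only [kron2, prodState, ← Finset.prod_mul_distrib]
  simp only [key]
  have hs := Finset.prod_univ_sum
    (fun _ : Fin n => (Finset.univ : Finset (Fin 2 × Fin 2)))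
    (fun ℓ y => ρ ℓ (if ℓ ∈ S then y.2 else y.1) y.1 * σ ℓ (if ℓ ∈ S then y.1 else y.2) y.2)
  have step : ∑ p : QIdx n × QIdx n,
      ∏ ℓ, (ρ ℓ (if ℓ ∈ S then p.2 ℓ else p.1 ℓ) (p.1 ℓ)
            * σ ℓ (if ℓ ∈ S then p.1 ℓ else p.2 ℓ) (p.2 ℓ))
      = ∑ x : Fin n → (Fin 2 × Fin 2),
      ∏ ℓ, (ρ ℓ (if ℓ ∈ S then (x ℓ).2 else (x ℓ).1) ((x ℓ).1)
            * σ ℓ (if ℓ ∈ S then (x ℓ).1 else (x ℓ).2) ((x ℓ).2)) :=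
    Fintype.sum_equiv (pairSplit n) _ _ (fun p => rfl)
  rw [step]
  refine Eq.trans hs.symm ?_
  apply Finset.prod_congr rfl
  intro ℓ _
  by_cases hℓ : ℓ ∈ S
  · simp only [hℓ, if_true]
    rw [Fintype.sum_prod_type]
    simp only [Fin.sum_univ_two]
    unfold tC; ring
  · simp only [hℓ, if_false]
    rw [Fintype.sum_prod_type]
    simp only [Fin.sum_univ_two]
    linear_combination (σ ℓ 0 0 + σ ℓ 1 1) * h1 ℓ + h2 ℓ

lemma An_prod {n : ℕ} (ρ σ : Fin n → Matrix (Fin 2) (Fin 2) ℂ)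
    (h1 : ∀ ℓ, ρ ℓ 0 0 + ρ ℓ 1 1 = 1) (h2 : ∀ ℓ, σ ℓ 0 0 + σ ℓ 1 1 = 1) :
    An (prodState ρ) (prodState σ) = ∏ ℓ, (2 + tC (ρ ℓ) (σ ℓ)) := by
  unfold An
  have hts : ∀ S : Finset (Fin n),
      Matrix.trace (partialSwap S * kron2 (prodState ρ) (prodState σ))
        = ∏ ℓ ∈ S, tC (ρ ℓ) (σ ℓ) := by
    intro S
    rw [trace_partialSwap S ρ σ h1 h2, Finset.prod_ite_mem, Finset.univ_inter]
  simp only [hts]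
  have hpa := Finset.prod_add (fun ℓ => tC (ρ ℓ) (σ ℓ)) (fun _ => (2:ℂ)) Finset.univ
  have hcomm : ∀ ℓ : Fin n, (2 : ℂ) + tC (ρ ℓ) (σ ℓ) = tC (ρ ℓ) (σ ℓ) + 2 := fun _ => add_comm _ _
  simp only [hcomm, hpa, Finset.powerset_univ]
  apply Finset.sum_congr rfl
  intro S _
  rw [Finset.prod_const, Finset.card_sdiff_of_subset (Finset.subset_univ S), Finset.card_univ,
    Fintype.card_fin, mul_comm]

/-! ### Facts about single-qubit density operators -/

structure QubitFacts (ρ : Matrix (Fin 2) (Fin 2) ℂ) : Prop where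
  h00 : ρ 0 0 = ((ρ 0 0).re : ℂ)
  h11 : ρ 1 1 = ((ρ 1 1).re : ℂ)
  h10 : ρ 1 0 = starRingEnd ℂ (ρ 0 1)
  ha : 0 ≤ (ρ 0 0).re
  hd : 0 ≤ (ρ 1 1).re
  hsum : (ρ 0 0).re + (ρ 1 1).re = 1
  hdet : Complex.normSq (ρ 0 1) ≤ (ρ 0 0).re * (ρ 1 1).re
lemma qubitFacts {ρ : Matrix (Fin 2) (Fin 2) ℂ} (h : IsDensity ρ) : QubitFacts ρ := by
  obtain ⟨hpsd, htr⟩ := h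
  have herm := hpsd.1
  have h10 : ρ 1 0 = starRingEnd ℂ (ρ 0 1) := (herm.apply 1 0).symm
  have h00s : starRingEnd ℂ (ρ 0 0) = ρ 0 0 := herm.apply 0 0
  have h11s : starRingEnd ℂ (ρ 1 1) = ρ 1 1 := herm.apply 1 1
  have h00 : ρ 0 0 = ((ρ 0 0).re : ℂ) := (Complex.conj_eq_iff_re.mp h00s).symm
  have h11 : ρ 1 1 = ((ρ 1 1).re : ℂ) := (Complex.conj_eq_iff_re.mp h11s).symm
  -- nonnegativity of diagonal entries
  have hq := hpsd.dotProduct_mulVec_nonneg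
  have hd0 : (0:ℂ) ≤ ρ 0 0 := by
    have := hq ![1, 0]
    simpa [dotProduct, Matrix.mulVec, Fin.sum_univ_two] using this
  have hd1 : (0:ℂ) ≤ ρ 1 1 := by
    have := hq ![0, 1]
    simpa [dotProduct, Matrix.mulVec, Fin.sum_univ_two] using this
  have ha : 0 ≤ (ρ 0 0).re := by
    rw [Complex.le_def] at hd0; exact hd0.1
  have hd : 0 ≤ (ρ 1 1).re := by
    rw [Complex.le_def] at hd1; exact hd1.1
  have hsum : (ρ 0 0).re + (ρ 1 1).re = 1 := by
    have : ρ.trace = ρ 0 0 + ρ 1 1 := by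
      rw [Matrix.trace_fin_two]
    rw [this] at htr
    have := congrArg Complex.re htr
    simpa using this
  -- determinant bound
  have hx1 := hq ![-(ρ 0 1), ρ 0 0]
  have hx2 := hq ![ρ 1 1, -(ρ 1 0)]
  have e1 : star ![-(ρ 0 1), ρ 0 0] ⬝ᵥ ρ *ᵥ ![-(ρ 0 1), ρ 0 0]
      = ρ 0 0 * (ρ 0 0 * ρ 1 1 - ρ 0 1 * ρ 1 0) := by
    simp [dotProduct, Matrix.mulVec, Fin.sum_univ_two, Complex.star_def, h10, h00s, h11s, Matrix.vecHead, Matrix.vecTail, Pi.star_apply]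
    try ring
  have e2 : star ![ρ 1 1, -(ρ 1 0)] ⬝ᵥ ρ *ᵥ ![ρ 1 1, -(ρ 1 0)]
      = ρ 1 1 * (ρ 0 0 * ρ 1 1 - ρ 0 1 * ρ 1 0) := by
    simp [dotProduct, Matrix.mulVec, Fin.sum_univ_two, Complex.star_def, h10, h00s, h11s, Matrix.vecHead, Matrix.vecTail, Pi.star_apply]
    ring
  rw [e1] at hx1
  rw [e2] at hx2
  have hone : ρ 0 0 + ρ 1 1 = 1 := by
    rw [h00, h11, ← Complex.ofReal_add, hsum, Complex.ofReal_one]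
  have hcomb : (0:ℂ) ≤ ρ 0 0 * ρ 1 1 - ρ 0 1 * ρ 1 0 := by
    have := add_nonneg hx1 hx2
    calc (0:ℂ) ≤ ρ 0 0 * (ρ 0 0 * ρ 1 1 - ρ 0 1 * ρ 1 0)
        + ρ 1 1 * (ρ 0 0 * ρ 1 1 - ρ 0 1 * ρ 1 0) := this
      _ = ρ 0 0 * ρ 1 1 - ρ 0 1 * ρ 1 0 := by
          rw [← add_mul, hone, one_mul]
  have hdet : Complex.normSq (ρ 0 1) ≤ (ρ 0 0).re * (ρ 1 1).re := by
    have hrw : ρ 0 0 * ρ 1 1 - ρ 0 1 * ρ 1 0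
        = (((ρ 0 0).re * (ρ 1 1).re - Complex.normSq (ρ 0 1) : ℝ) : ℂ) := by
      rw [h10]
      rw [Complex.mul_conj]
      rw [h00, h11]
      push_cast
      simp only [Complex.ofReal_re]
      try ring
    rw [hrw] at hcomb
    have := (Complex.le_def.mp hcomb).1
    simpa using this
  exact ⟨h00, h11, h10, ha, hd, hsum, hdet⟩


section real_part
variable {ρ σ : Matrix (Fin 2) (Fin 2) ℂ}

lemma tC_eq (Fρ : QubitFacts ρ) (Fσ : QubitFacts σ) :
    tC ρ σ = (((ρ 0 0).re * (σ 0 0).re + (ρ 1 1).re * (σ 1 1).re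
      + 2 * (ρ 0 1 * starRingEnd ℂ (σ 0 1)).re : ℝ) : ℂ) := by
  unfold tC
  rw [Fρ.h10, Fσ.h10]
  have hc : ρ 0 1 * starRingEnd ℂ (σ 0 1) + starRingEnd ℂ (ρ 0 1) * σ 0 1
      = 2 * (((ρ 0 1 * starRingEnd ℂ (σ 0 1)).re : ℝ) : ℂ) := by
    have : starRingEnd ℂ (ρ 0 1) * σ 0 1
        = starRingEnd ℂ (ρ 0 1 * starRingEnd ℂ (σ 0 1)) := by
      rw [RingHom.map_mul, Complex.conj_conj]
    rw [this, Complex.add_conj]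
    push_cast
    ring
  calc ρ 0 0 * σ 0 0 + ρ 0 1 * starRingEnd ℂ (σ 0 1) + starRingEnd ℂ (ρ 0 1) * σ 0 1
        + ρ 1 1 * σ 1 1
      = ρ 0 0 * σ 0 0 + ρ 1 1 * σ 1 1
        + (ρ 0 1 * starRingEnd ℂ (σ 0 1) + starRingEnd ℂ (ρ 0 1) * σ 0 1) := by ring
    _ = _ := by
      rw [hc, Fρ.h00, Fσ.h00, Fρ.h11, Fσ.h11]
      push_cast
      simp only [Complex.ofReal_re]
      try ring

lemma tC_self (Fρ : QubitFacts ρ) :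
    tC ρ ρ = (((ρ 0 0).re ^ 2 + (ρ 1 1).re ^ 2 + 2 * Complex.normSq (ρ 0 1) : ℝ) : ℂ) := by
  unfold tC
  rw [Fρ.h10, Complex.mul_conj, Fρ.h00, Fρ.h11]
  have : starRingEnd ℂ (ρ 0 1) * ρ 0 1 = ((Complex.normSq (ρ 0 1) : ℝ) : ℂ) := by
    rw [mul_comm, Complex.mul_conj]
  rw [this]
  push_cast
  simp only [Complex.ofReal_re]
  try ring

lemma r_sq_le (z w : ℂ) : (z * starRingEnd ℂ w).re ^ 2 ≤ Complex.normSq z * Complex.normSq w := by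
  have h1 : Complex.normSq (z * starRingEnd ℂ w) = Complex.normSq z * Complex.normSq w := by
    rw [Complex.normSq_mul, Complex.normSq_conj]
  have h2 : (z * starRingEnd ℂ w).re ^ 2 ≤ Complex.normSq (z * starRingEnd ℂ w) := by
    rw [Complex.normSq_apply]
    nlinarith [sq_nonneg (z * starRingEnd ℂ w).im]
  linarith

lemma core_ineq (t p q : ℝ) (ht0 : 0 ≤ t) (ht1 : t ≤ 1)
    (hp0 : 1/2 ≤ p) (hp1 : p ≤ 1) (hq0 : 1/2 ≤ q) (hq1 : q ≤ 1) :
    0 ≤ (2 + t) * ((1/5) * (1 + 2*t) + (3/5) * (2*t^2 + p*q) - (3/10) * (p + q + 2*t))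
    ∧ (2 + t) * ((1/5) * (1 + 2*t) + (3/5) * (2*t^2 + p*q) - (3/10) * (p + q + 2*t))
      ≤ 18/5 := by
  constructor
  · have hb : 0 ≤ (1/5) * (1 + 2*t) + (3/5) * (2*t^2 + p*q) - (3/10) * (p + q + 2*t) := by
      nlinarith [sq_nonneg (12*t - 1), mul_nonneg (by linarith : (0:ℝ) ≤ 2*p - 1) (by linarith : (0:ℝ) ≤ 2*q - 1)]
    nlinarith [hb]
  · nlinarith [mul_nonneg (by linarith : (0:ℝ) ≤ 1 - t)
        (by nlinarith : (0:ℝ) ≤ 12*t^2 + 34*t + 32),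
      mul_nonneg (by linarith : (0:ℝ) ≤ 2 + t)
        (by nlinarith [mul_nonneg (by linarith : (0:ℝ) ≤ 3*q) (by linarith : (0:ℝ) ≤ 1-p),
              mul_nonneg (by linarith : (0:ℝ) ≤ 3*p) (by linarith : (0:ℝ) ≤ 1-q)] :
          (0:ℝ) ≤ 3*q*(1-p) + 3*p*(1-q))]

end real_part

section bounds
variable {ρ σ : Matrix (Fin 2) (Fin 2) ℂ}

lemma t_bounds (Fρ : QubitFacts ρ) (Fσ : QubitFacts σ) :
    0 ≤ (ρ 0 0).re * (σ 0 0).re + (ρ 1 1).re * (σ 1 1).re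
        + 2 * (ρ 0 1 * starRingEnd ℂ (σ 0 1)).re
    ∧ (ρ 0 0).re * (σ 0 0).re + (ρ 1 1).re * (σ 1 1).re
        + 2 * (ρ 0 1 * starRingEnd ℂ (σ 0 1)).re ≤ 1 := by
  set a := (ρ 0 0).re; set d := (ρ 1 1).re
  set c := (σ 0 0).re; set e := (σ 1 1).re
  set r := (ρ 0 1 * starRingEnd ℂ (σ 0 1)).re with hr
  have hnz := Fρ.hdet
  have hnw := Fσ.hdet
  have hz0 := Complex.normSq_nonneg (ρ 0 1)
  have hw0 := Complex.normSq_nonneg (σ 0 1)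
  have hr2 := r_sq_le (ρ 0 1) (σ 0 1)
  have hprod : Complex.normSq (ρ 0 1) * Complex.normSq (σ 0 1) ≤ (a*d) * (c*e) := by
    have := mul_le_mul hnz hnw hw0 (mul_nonneg Fρ.ha Fρ.hd)
    linarith
  have hr2' : r^2 ≤ (a*d) * (c*e) := le_trans hr2 hprod
  have ha := Fρ.ha; have hd := Fρ.hd; have hc := Fσ.ha; have he := Fσ.hd
  have hs1 := Fρ.hsum; have hs2 := Fσ.hsum
  constructor
  · have key : 0 ≤ (a*c + d*e - 2*r) * (a*c + d*e + 2*r) := by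
      nlinarith [hr2', sq_nonneg (a*c - d*e)]
    have h2 : 0 ≤ a*c + d*e :=
      add_nonneg (mul_nonneg ha hc) (mul_nonneg hd he)
    by_contra hcon
    push_neg at hcon
    nlinarith [key, h2, hcon]
  · have key : 0 ≤ (a*e + d*c - 2*r) * (a*e + d*c + 2*r) := by
      nlinarith [hr2', sq_nonneg (a*e - d*c)]
    have h2 : 0 ≤ a*e + d*c :=
      add_nonneg (mul_nonneg ha he) (mul_nonneg hd hc)
    have h3 : 0 ≤ a*e + d*c - 2*r := by
      by_contra hcon
      push_neg at hcon
      nlinarith [key, h2, hcon]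
    nlinarith [h3, hs1, hs2]

lemma p_bounds (Fρ : QubitFacts ρ) :
    1/2 ≤ (ρ 0 0).re ^ 2 + (ρ 1 1).re ^ 2 + 2 * Complex.normSq (ρ 0 1)
    ∧ (ρ 0 0).re ^ 2 + (ρ 1 1).re ^ 2 + 2 * Complex.normSq (ρ 0 1) ≤ 1 := by
  have hnz := Fρ.hdet
  have hz0 := Complex.normSq_nonneg (ρ 0 1)
  have hs := Fρ.hsum
  constructor
  · nlinarith [sq_nonneg ((ρ 0 0).re - (ρ 1 1).re)]
  · nlinarith []

lemma perqubit (hρ : IsDensity ρ) (hσ : IsDensity σ) :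
    ∃ x : ℝ, 0 ≤ x ∧ x ≤ 18/5 ∧ (2 + tC ρ σ) * bC ρ σ = (x : ℂ) := by
  have Fρ := qubitFacts hρ
  have Fσ := qubitFacts hσ
  set t := (ρ 0 0).re * (σ 0 0).re + (ρ 1 1).re * (σ 1 1).re
      + 2 * (ρ 0 1 * starRingEnd ℂ (σ 0 1)).re with hts
  set p := (ρ 0 0).re ^ 2 + (ρ 1 1).re ^ 2 + 2 * Complex.normSq (ρ 0 1) with hps
  set q := (σ 0 0).re ^ 2 + (σ 1 1).re ^ 2 + 2 * Complex.normSq (σ 0 1) with hqs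
  refine ⟨(2 + t) * ((1/5) * (1 + 2*t) + (3/5) * (2*t^2 + p*q) - (3/10) * (p + q + 2*t)),
    ?_, ?_, ?_⟩
  · exact (core_ineq t p q (t_bounds Fρ Fσ).1 (t_bounds Fρ Fσ).2
      (p_bounds Fρ).1 (p_bounds Fρ).2 (p_bounds Fσ).1 (p_bounds Fσ).2).1
  · exact (core_ineq t p q (t_bounds Fρ Fσ).1 (t_bounds Fρ Fσ).2
      (p_bounds Fρ).1 (p_bounds Fρ).2 (p_bounds Fσ).1 (p_bounds Fσ).2).2
  · rw [bC, tC_eq Fρ Fσ, tC_self Fρ, tC_self Fσ, ← hts, ← hps, ← hqs]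
    push_cast
    ring
end bounds

/-! ### pure product states -/

lemma pure_prod {n : ℕ} (ψ : Fin n → (Fin 2 → ℂ)) :
    pureState (fun s : QIdx n => ∏ ℓ, ψ ℓ (s ℓ))
      = prodState (fun ℓ => pureState (ψ ℓ)) := by
  funext a b
  simp only [pureState, prodState]
  have hstar : star (∏ ℓ, ψ ℓ (b ℓ)) = ∏ ℓ, star (ψ ℓ (b ℓ)) := by
    rw [Complex.star_def, map_prod]
  rw [hstar, ← Finset.prod_mul_distrib]

lemma tC_pure (φ : Fin 2 → ℂ) (h : (∑ i, φ i * star (φ i)) = 1) :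
    tC (pureState φ) (pureState φ) = 1 := by
  rw [Fin.sum_univ_two] at h
  unfold tC pureState
  linear_combination (φ 0 * star (φ 0) + φ 1 * star (φ 1) + 1) * h

lemma trace_pure (φ : Fin 2 → ℂ) (h : (∑ i, φ i * star (φ i)) = 1) :
    pureState φ 0 0 + pureState φ 1 1 = 1 := by
  rw [Fin.sum_univ_two] at h
  unfold pureState
  linear_combination h

/-- For arbitrary product density operators
`ρ = ρ₁ ⊗ ⋯ ⊗ ρₙ`, `σ = σ₁ ⊗ ⋯ ⊗ σₙ`, one has `A_n(ρ,σ) · B_{n,H}(ρ,σ) ≤ (18/5)^n`,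
with equality attained when `ρ = σ` is an identical pure product state. -/
theorem haar_certificate_product_pairs (n : ℕ) (hn : 1 ≤ n) :
    (∀ ρ σ : Fin n → Matrix (Fin 2) (Fin 2) ℂ,
      (∀ ℓ, IsDensity (ρ ℓ)) → (∀ ℓ, IsDensity (σ ℓ)) →
      An (prodState ρ) (prodState σ) * BnH (prodState ρ) (prodState σ)
        ≤ ((18 : ℂ)/5)^n) ∧
    (∀ ψ : Fin n → (Fin 2 → ℂ), (∀ ℓ, (∑ i, ψ ℓ i * star (ψ ℓ i)) = 1) →
      An (pureState (fun s : QIdx n => ∏ ℓ, ψ ℓ (s ℓ)))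
         (pureState (fun s : QIdx n => ∏ ℓ, ψ ℓ (s ℓ)))
        * BnH (pureState (fun s : QIdx n => ∏ ℓ, ψ ℓ (s ℓ)))
              (pureState (fun s : QIdx n => ∏ ℓ, ψ ℓ (s ℓ)))
        = ((18 : ℂ)/5)^n) := by
  constructor
  · intro ρ σ hρ hσ
    have h1 : ∀ ℓ, ρ ℓ 0 0 + ρ ℓ 1 1 = 1 := by
      intro ℓ
      have := (hρ ℓ).2
      rwa [Matrix.trace_fin_two] at this
    have h2 : ∀ ℓ, σ ℓ 0 0 + σ ℓ 1 1 = 1 := by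
      intro ℓ
      have := (hσ ℓ).2
      rwa [Matrix.trace_fin_two] at this
    rw [An_prod ρ σ h1 h2, BnH_prod ρ σ]
    have hb : ∀ ℓ, q4 R4H (ρ ℓ) (σ ℓ) = bC (ρ ℓ) (σ ℓ) :=
      fun ℓ => q4_R4H (ρ ℓ) (σ ℓ) (h1 ℓ) (h2 ℓ)
    simp only [hb]
    rw [← Finset.prod_mul_distrib]
    choose x hx0 hx1 hxe using fun ℓ => perqubit (hρ ℓ) (hσ ℓ)
    simp only [hxe]
    rw [← Complex.ofReal_prod]
    have hpow : ((18 : ℂ)/5)^n = (((18/5 : ℝ)^n : ℝ) : ℂ) := by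
      push_cast; ring
    rw [hpow]
    rw [Complex.real_le_real]
    calc ∏ ℓ, x ℓ ≤ ∏ _ℓ : Fin n, (18/5 : ℝ) :=
          Finset.prod_le_prod (fun ℓ _ => hx0 ℓ) (fun ℓ _ => hx1 ℓ)
      _ = (18/5 : ℝ)^n := by
          rw [Finset.prod_const, Finset.card_univ, Fintype.card_fin]
  · intro ψ hψ
    rw [pure_prod ψ]
    have h1 : ∀ ℓ, pureState (ψ ℓ) 0 0 + pureState (ψ ℓ) 1 1 = 1 :=
      fun ℓ => trace_pure (ψ ℓ) (hψ ℓ)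
    rw [An_prod _ _ h1 h1, BnH_prod]
    have hb : ∀ ℓ : Fin n, q4 R4H (pureState (ψ ℓ)) (pureState (ψ ℓ))
        = bC (pureState (ψ ℓ)) (pureState (ψ ℓ)) :=
      fun ℓ => q4_R4H _ _ (h1 ℓ) (h1 ℓ)
    simp only [hb]
    have ht : ∀ ℓ : Fin n, tC (pureState (ψ ℓ)) (pureState (ψ ℓ)) = 1 :=
      fun ℓ => tC_pure (ψ ℓ) (hψ ℓ)
    have hBval : ∀ ℓ : Fin n, bC (pureState (ψ ℓ)) (pureState (ψ ℓ)) = 6/5 := by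
      intro ℓ
      unfold bC
      rw [ht ℓ]
      norm_num
    have hAval : ∀ ℓ : Fin n, (2 : ℂ) + tC (pureState (ψ ℓ)) (pureState (ψ ℓ)) = 3 := by
      intro ℓ; rw [ht ℓ]; norm_num
    simp only [hBval, hAval]
    rw [Finset.prod_const, Finset.prod_const, ← mul_pow, Finset.card_univ, Fintype.card_fin]
    norm_num
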